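/- Let q : ℝ → Quaternion ℝ be differentiable and satisfy the attitude kinematics q'(t) = (1/2) · q(t) * ⟦ω(t)⟧ for a continuous signal ω : ℝ → ℝ³. Then t ↦ ‖q⃗(t)‖² is differentiable with derivative q°(t) · ⟨q⃗(t), ω(t)⟩. (The cross-product term q⃗ × ω in the vector-part kinematics is orthogonal to q⃗ and contributes nothing.) -/

import Mathlib

noncomputable section

open scoped RealInnerProductSpace

/-- The vector (imaginary) part of a quaternion, as a vector in Euclidean `ℝ³`. -/
def vecPart (p : Quaternion ℝ) : EuclideanSpace ℝ (Fin 3) := WithLp.toLp 2 ![p.imI, p.imJ, p.imK]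

/-- The pure-imaginary quaternion `⟦v⟧` with vector part `v`. -/
def quatOfVec (v : EuclideanSpace ℝ (Fin 3)) : Quaternion ℝ := ⟨0, v 0, v 1, v 2⟩

private def imICLM : Quaternion ℝ →L[ℝ] ℝ :=
  LinearMap.toContinuousLinearMap
    { toFun := QuaternionAlgebra.imI
      map_add' := by intros; simp
      map_smul' := by intros; simp }

private def imJCLM : Quaternion ℝ →L[ℝ] ℝ :=
  LinearMap.toContinuousLinearMap
    { toFun := QuaternionAlgebra.imJ
      map_add' := by intros; simp
      map_smul' := by intros; simp }

private def imKCLM : Quaternion ℝ →L[ℝ] ℝ :=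
  LinearMap.toContinuousLinearMap
    { toFun := QuaternionAlgebra.imK
      map_add' := by intros; simp
      map_smul' := by intros; simp }

theorem lyapunov_derivative_identity
    (q : ℝ → Quaternion ℝ) (ω : ℝ → EuclideanSpace ℝ (Fin 3))
    (hq : Differentiable ℝ q) (hω : Continuous ω)
    (hdyn : ∀ t : ℝ, deriv q t = (1 / 2 : ℝ) • (q t * quatOfVec (ω t))) :
    ∀ t : ℝ, HasDerivAt (fun τ => ‖vecPart (q τ)‖ ^ 2)
      ((q t).re * ⟪vecPart (q t), ω t⟫) t := by
  intro t
  have hqd : HasDerivAt q (deriv q t) t := (hq t).hasDerivAt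
  have hI : HasDerivAt (fun τ => (q τ).imI) ((deriv q t).imI) t :=
    (imICLM.hasFDerivAt.comp_hasDerivAt t hqd)
  have hJ : HasDerivAt (fun τ => (q τ).imJ) ((deriv q t).imJ) t :=
    (imJCLM.hasFDerivAt.comp_hasDerivAt t hqd)
  have hK : HasDerivAt (fun τ => (q τ).imK) ((deriv q t).imK) t :=
    (imKCLM.hasFDerivAt.comp_hasDerivAt t hqd)
  have hsum : HasDerivAt
      (fun τ => (q τ).imI * (q τ).imI + (q τ).imJ * (q τ).imJ + (q τ).imK * (q τ).imK)
      ((deriv q t).imI * (q t).imI + (q t).imI * (deriv q t).imI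
        + ((deriv q t).imJ * (q t).imJ + (q t).imJ * (deriv q t).imJ)
        + ((deriv q t).imK * (q t).imK + (q t).imK * (deriv q t).imK)) t :=
    ((hI.mul hI).add (hJ.mul hJ)).add (hK.mul hK)
  have hfun : (fun τ => ‖vecPart (q τ)‖ ^ 2)
      = fun τ => (q τ).imI * (q τ).imI + (q τ).imJ * (q τ).imJ + (q τ).imK * (q τ).imK := by
    funext τ
    rw [← real_inner_self_eq_norm_sq]
    simp only [vecPart, PiLp.inner_apply, Fin.sum_univ_three, RCLike.inner_apply, conj_trivial, Matrix.cons_val_zero, Matrix.cons_val_one, Matrix.cons_val_two, Matrix.head_cons, Matrix.tail_cons]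
  have hval : (deriv q t).imI * (q t).imI + (q t).imI * (deriv q t).imI
        + ((deriv q t).imJ * (q t).imJ + (q t).imJ * (deriv q t).imJ)
        + ((deriv q t).imK * (q t).imK + (q t).imK * (deriv q t).imK)
      = (q t).re * ⟪vecPart (q t), ω t⟫ := by
    rw [hdyn t]
    simp only [Quaternion.imI_smul, Quaternion.imJ_smul, Quaternion.imK_smul, Quaternion.imI_mul, Quaternion.imJ_mul, Quaternion.imK_mul]
    simp only [vecPart, PiLp.inner_apply, Fin.sum_univ_three, quatOfVec,
      Quaternion.imI_smul, Quaternion.imJ_smul, Quaternion.imK_smul,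
      Quaternion.imI_mul, Quaternion.imJ_mul, Quaternion.imK_mul,
      RCLike.inner_apply, conj_trivial, Matrix.cons_val_zero, Matrix.cons_val_one,
      Matrix.head_cons, Matrix.cons_val_two, Matrix.tail_cons, smul_eq_mul]
    ring
  rw [hfun, ← hval]
  exact hsum
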